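/- Let p be a prime, A an integral domain of characteristic p which is a unique factorization domain, and K its fraction field. Let ξ_1, …, ξ_r be pairwise non-associated prime elements of A, let n_1, …, n_r be integers, and set x = ∏_t ξ_t^{n_t} and x' = ∏_t ξ_t^{⌊n_t/p⌋} in K. Let m ≥ 2. Then for every a ∈ 𝕎 K: a satisfies fil(x', m−1) if and only if V(F(a)) satisfies fil(x, m), where F : 𝕎 K → 𝕎 K is the coefficientwise Frobenius (the map induced by y ↦ y^p on K) and V is the Verschiebung. (This expresses that for ω ∈ W_{m−1}(K), ω ∈ fil_{D/p} W_{m−1}(K) if and only if p̄(ω) ∈ fil_D W_m(K), where p̄ is the unique map with p = p̄ ∘ R.) -/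

import Mathlib

/-- The Brylinski–Kato filtration condition on (truncated) Witt vectors, in Witt
coordinates: `a ∈ 𝕎 K` satisfies `fil(x, m)` if for every `j < m` the element
`x * (a.coeff j) ^ (p ^ (m - 1 - j))` lies in the image of `A` in `K`. -/
def WittFil (p : ℕ) [Fact p.Prime] (A : Type*) {K : Type*} [CommRing A] [CommRing K]
    [Algebra A K] (x : K) (m : ℕ) (a : WittVector p K) : Prop :=
  ∀ j < m, x * a.coeff j ^ p ^ (m - 1 - j) ∈ Set.range (algebraMap A K)

private lemma key_dvd {A : Type*} [CommRing A] [IsDomain A] [UniqueFactorizationMonoid A]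
    (p : ℕ) (hp : p ≠ 0) (e : A) (he0 : e ≠ 0)
    (he : ∀ q : A, Prime q → ¬ q ^ p ∣ e) (t : A) :
    ∀ s w : A, e * s ^ p = w * t ^ p → t ∣ s := by
  induction t using UniqueFactorizationMonoid.induction_on_prime with
  | h₁ =>
    intro s w h
    rw [zero_pow hp, mul_zero] at h
    rcases mul_eq_zero.mp h with h | h
    · exact absurd h he0
    · rw [(pow_eq_zero_iff hp).mp h]
  | h₂ u hu => exact fun s w _ => hu.dvd
  | h₃ a q ha hq ih =>
    intro s w h
    have hqs : q ∣ s := by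
      by_contra hqs
      apply he q hq
      refine hq.pow_dvd_of_dvd_mul_right (b := s ^ p) p
        (fun hd => hqs (hq.dvd_of_dvd_pow hd)) ?_
      exact ⟨w * a ^ p, by rw [h, mul_pow]; ring⟩
    obtain ⟨s', rfl⟩ := hqs
    have h2 : e * s' ^ p = w * a ^ p := by
      apply mul_left_cancel₀ (pow_ne_zero p hq.ne_zero)
      rw [mul_pow, mul_pow] at h
      linear_combination h
    exact mul_dvd_mul_left q (ih s' w h2)

private lemma mem_range_of_pow {A : Type*} [CommRing A] [IsDomain A]
    [UniqueFactorizationMonoid A] {K : Type*} [Field K] [Algebra A K] [IsFractionRing A K]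
    (p : ℕ) (hp : p ≠ 0) (e : A) (he0 : e ≠ 0)
    (he : ∀ q : A, Prime q → ¬ q ^ p ∣ e) (z : K)
    (h : z ^ p * algebraMap A K e ∈ Set.range (algebraMap A K)) :
    z ∈ Set.range (algebraMap A K) := by
  obtain ⟨s, t, ht, rfl⟩ := IsFractionRing.div_surjective (A := A) z
  obtain ⟨w, hw⟩ := h
  have htK : algebraMap A K t ≠ 0 :=
    IsFractionRing.to_map_ne_zero_of_mem_nonZeroDivisors ht
  have key : e * s ^ p = w * t ^ p := by
    apply IsFractionRing.injective A K
    rw [map_mul, map_mul, map_pow, map_pow]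
    rw [div_pow] at hw
    field_simp at hw
    linear_combination -hw
  obtain ⟨c, rfl⟩ := key_dvd p hp e he0 he t s w key
  refine ⟨c, ?_⟩
  rw [map_mul, mul_comm, mul_div_assoc, div_self htK, mul_one]

/-- Let `A` be a UFD of characteristic `p` with fraction field `K`,
`ξ₁, …, ξ_r` pairwise non-associated primes, `n₁, …, n_r ∈ ℤ`, `x = ∏ ξ_t ^ n_t`,
`x' = ∏ ξ_t ^ ⌊n_t/p⌋`, and `m ≥ 2`.  Then for every `a ∈ 𝕎 K`: `a` satisfies
`fil(x', m-1)` iff `V(F(a))` satisfies `fil(x, m)`, where `F` is the coefficientwise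
Frobenius (induced by `y ↦ y^p`) and `V` the Verschiebung.  (For `ω ∈ W_{m-1}(K)`,
`ω ∈ fil_{D/p} W_{m-1}(K)` iff `p̄(ω) ∈ fil_D W_m(K)`.) -/
theorem wittFil_verschiebung_frobenius_iff
    (p : ℕ) [Fact p.Prime]
    (A : Type*) [CommRing A] [IsDomain A] [CharP A p] [UniqueFactorizationMonoid A]
    (K : Type*) [Field K] [Algebra A K] [IsFractionRing A K]
    (r : ℕ) (ξ : Fin r → A)
    (hprime : ∀ t, Prime (ξ t))
    (hassoc : ∀ t t', t ≠ t' → ¬ Associated (ξ t) (ξ t'))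
    (n : Fin r → ℤ)
    (x x' : K)
    (hx : x = ∏ t, (algebraMap A K (ξ t)) ^ (n t))
    (hx' : x' = ∏ t, (algebraMap A K (ξ t)) ^ (Int.fdiv (n t) p))
    (m : ℕ) (hm : 2 ≤ m)
    (φ : K →+* K) (hφ : ∀ y : K, φ y = y ^ p) :
    ∀ a : WittVector p K,
      WittFil p A x' (m - 1) a ↔
      WittFil p A x m (WittVector.verschiebung (WittVector.map φ a)) := by
  have hp : p.Prime := Fact.out
  have hp0 : (0:ℤ) < (p:ℤ) := by exact_mod_cast hp.pos
  set e : A := ∏ t, ξ t ^ ((n t).fmod p).toNat with he_def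
  have hfm : ∀ t, (((n t).fmod p).toNat : ℤ) = (n t).fmod p := fun t =>
    Int.toNat_of_nonneg (by
      rw [Int.fmod_eq_emod_of_nonneg _ hp0.le]
      exact Int.emod_nonneg _ hp0.ne')
  have hfmlt : ∀ t, ((n t).fmod p).toNat < p := fun t => by
    have h1 := Int.fmod_lt_of_pos (n t) hp0
    have h2 := hfm t
    omega
  have hξ0 : ∀ t, algebraMap A K (ξ t) ≠ 0 := fun t =>
    (map_ne_zero_iff _ (IsFractionRing.injective A K)).mpr (hprime t).ne_zero
  have he0 : e ≠ 0 :=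
    Finset.prod_ne_zero_iff.mpr fun t _ => pow_ne_zero _ (hprime t).ne_zero
  have hxe : x = x' ^ p * algebraMap A K e := by
    rw [hx, hx', he_def, map_prod, ← Finset.prod_pow, ← Finset.prod_mul_distrib]
    refine Finset.prod_congr rfl fun t _ => ?_
    rw [map_pow, ← zpow_natCast (algebraMap A K (ξ t)) (((n t).fmod p).toNat), hfm t,
      ← zpow_natCast ((algebraMap A K (ξ t)) ^ ((n t).fdiv p)) p,
      ← zpow_mul, ← zpow_add₀ (hξ0 t)]
    congr 1
    have h := Int.mul_fdiv_add_fmod (n t) p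
    rw [mul_comm ((n t).fdiv ↑p) (p:ℤ)]
    linarith
  have heP : ∀ q : A, Prime q → ¬ q ^ p ∣ e := by
    intro q hq hdvd
    have hq1 : q ∣ e := (dvd_pow_self q hp.ne_zero).trans hdvd
    obtain ⟨t₀, -, hqt⟩ := hq.exists_mem_finset_dvd hq1
    have hqξ : Associated q (ξ t₀) :=
      hq.irreducible.associated_of_dvd (hprime t₀).irreducible (hq.dvd_of_dvd_pow hqt)
    have hpp : Associated (q ^ p) (ξ t₀ ^ p) := hqξ.pow_pow
    have hdvd' : ξ t₀ ^ p ∣ e := hpp.dvd_iff_dvd_left.mp hdvd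
    rw [he_def, ← Finset.mul_prod_erase Finset.univ _ (Finset.mem_univ t₀)] at hdvd'
    have hnc : ¬ ξ t₀ ∣ ∏ t ∈ Finset.univ.erase t₀, ξ t ^ ((n t).fmod p).toNat := by
      intro hdc
      obtain ⟨t', ht', hdt⟩ := (hprime t₀).exists_mem_finset_dvd hdc
      have htne : t' ≠ t₀ := (Finset.mem_erase.mp ht').1
      exact hassoc t₀ t' (Ne.symm htne)
        ((hprime t₀).irreducible.associated_of_dvd (hprime t').irreducible
          ((hprime t₀).dvd_of_dvd_pow hdt))
    have hfin : ξ t₀ ^ p ∣ ξ t₀ ^ ((n t₀).fmod p).toNat :=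
      (hprime t₀).pow_dvd_of_dvd_mul_right p hnc hdvd'
    have := (pow_dvd_pow_iff (hprime t₀).ne_zero (hprime t₀).not_unit).mp hfin
    exact absurd this (by have := hfmlt t₀; omega)
  intro a
  constructor
  · intro H j hj
    match j with
    | 0 =>
      rw [WittVector.verschiebung_coeff_zero, zero_pow (pow_ne_zero _ hp.ne_zero), mul_zero]
      exact ⟨0, map_zero _⟩
    | j + 1 =>
      have hj' : j < m - 1 := by omega
      obtain ⟨w, hw⟩ := H j hj'
      rw [WittVector.verschiebung_coeff_succ, WittVector.map_coeff, hφ]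
      refine ⟨w ^ p * e, ?_⟩
      have hkk : p * p ^ (m - 1 - (j + 1)) = p ^ (m - 1 - 1 - j) * p := by
        have h1 : m - 1 - (j + 1) = m - 1 - 1 - j := by omega
        rw [h1, mul_comm]
      have hpow : (a.coeff j ^ p) ^ p ^ (m - 1 - (j + 1)) =
          (a.coeff j ^ p ^ (m - 1 - 1 - j)) ^ p := by
        rw [← pow_mul, hkk, pow_mul]
      rw [hpow, map_mul, map_pow, hw, hxe]
      ring
  · intro H j hj
    have hmem := H (j + 1) (by omega)
    rw [WittVector.verschiebung_coeff_succ, WittVector.map_coeff, hφ] at hmem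
    have hkk : p * p ^ (m - 1 - (j + 1)) = p ^ (m - 1 - 1 - j) * p := by
      have h1 : m - 1 - (j + 1) = m - 1 - 1 - j := by omega
      rw [h1, mul_comm]
    have hzeq : x * (a.coeff j ^ p) ^ p ^ (m - 1 - (j + 1)) =
        (x' * a.coeff j ^ p ^ (m - 1 - 1 - j)) ^ p * algebraMap A K e := by
      rw [hxe, ← pow_mul, hkk, pow_mul]
      ring
    rw [hzeq] at hmem
    exact mem_range_of_pow p hp.ne_zero e he0 heP _ hmem
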